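/- Let 0 < q < 1, b > 0, n a positive integer, and a = b q^n. If f, g : [a,b] → ℝ are both q-increasing (f(qx) ≤ f(x) whenever x, qx ∈ [a,b]) or both q-decreasing, then G_q(fg;a,b) ≥ (1/(b−a))·G_q(f;a,b)·G_q(g;a,b), where G_q(f;a,b) = b(1−q)∑_{k=0}^{n−1} f(b q^k) q^k. -/

import Mathlib

open scoped BigOperators
open Set

/-- Weighted Chebyshev sum inequality: if the products `(F i - F j) * (G i - G j)`
are nonnegative and the weights are nonnegative, then
`(∑ w F G) * (∑ w) ≥ (∑ w F) * (∑ w G)`. -/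
lemma weighted_chebyshev (n : ℕ) (w F G : ℕ → ℝ)
    (hw : ∀ k ∈ Finset.range n, 0 ≤ w k)
    (hsync : ∀ i ∈ Finset.range n, ∀ j ∈ Finset.range n,
      0 ≤ (F i - F j) * (G i - G j)) :
    (∑ k ∈ Finset.range n, w k * F k) * (∑ k ∈ Finset.range n, w k * G k) ≤
      (∑ k ∈ Finset.range n, w k) * (∑ k ∈ Finset.range n, w k * F k * G k) := by
  have h : 0 ≤ ∑ i ∈ Finset.range n, ∑ j ∈ Finset.range n,
      w i * w j * ((F i - F j) * (G i - G j)) := by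
    apply Finset.sum_nonneg
    intro i hi
    apply Finset.sum_nonneg
    intro j hj
    exact mul_nonneg (mul_nonneg (hw i hi) (hw j hj)) (hsync i hi j hj)
  have expand : ∑ i ∈ Finset.range n, ∑ j ∈ Finset.range n,
      w i * w j * ((F i - F j) * (G i - G j)) =
      2 * ((∑ k ∈ Finset.range n, w k) * (∑ k ∈ Finset.range n, w k * F k * G k)
        - (∑ k ∈ Finset.range n, w k * F k) * (∑ k ∈ Finset.range n, w k * G k)) := by
    have : ∀ i, ∑ j ∈ Finset.range n, w i * w j * ((F i - F j) * (G i - G j)) =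
        w i * F i * G i * (∑ k ∈ Finset.range n, w k)
        - w i * F i * (∑ k ∈ Finset.range n, w k * G k)
        - w i * G i * (∑ k ∈ Finset.range n, w k * F k)
        + w i * (∑ k ∈ Finset.range n, w k * F k * G k) := by
      intro i
      rw [Finset.mul_sum, Finset.mul_sum, Finset.mul_sum, Finset.mul_sum,
        ← Finset.sum_sub_distrib, ← Finset.sum_sub_distrib, ← Finset.sum_add_distrib]
      apply Finset.sum_congr rfl
      intro j _
      ring
    simp only [this]
    rw [Finset.sum_add_distrib, Finset.sum_sub_distrib, Finset.sum_sub_distrib,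
      ← Finset.sum_mul, ← Finset.sum_mul, ← Finset.sum_mul, ← Finset.sum_mul]
    ring
  nlinarith [h, expand]

/-- q-Chebyshev inequality for the restricted q-integral
`G_q(f;a,b) = b(1−q)∑_{k<n} f(b q^k) q^k` with `a = b q^n`. -/
theorem q_chebyshev_Gq (q b : ℝ) (n : ℕ) (f g : ℝ → ℝ)
    (hq0 : 0 < q) (hq1 : q < 1) (hb : 0 < b) (hn : 0 < n) (a : ℝ) (ha : a = b * q ^ n)
    (hmono :
      ((∀ x, x ∈ Icc a b → q * x ∈ Icc a b → f (q * x) ≤ f x) ∧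
        (∀ x, x ∈ Icc a b → q * x ∈ Icc a b → g (q * x) ≤ g x)) ∨
      ((∀ x, x ∈ Icc a b → q * x ∈ Icc a b → f x ≤ f (q * x)) ∧
        (∀ x, x ∈ Icc a b → q * x ∈ Icc a b → g x ≤ g (q * x)))) :
    b * (1 - q) * ∑ k ∈ Finset.range n, f (b * q ^ k) * g (b * q ^ k) * q ^ k ≥
      (1 / (b - a)) * (b * (1 - q) * ∑ k ∈ Finset.range n, f (b * q ^ k) * q ^ k) *
        (b * (1 - q) * ∑ k ∈ Finset.range n, g (b * q ^ k) * q ^ k) := by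
  -- membership
  have hmem : ∀ k, k ≤ n → b * q ^ k ∈ Icc a b := by
    intro k hk
    constructor
    · rw [ha]
      exact mul_le_mul_of_nonneg_left (pow_le_pow_of_le_one hq0.le hq1.le hk) hb.le
    · calc b * q ^ k ≤ b * 1 := by
            exact mul_le_mul_of_nonneg_left (pow_le_one₀ hq0.le hq1.le) hb.le
        _ = b := mul_one b
  have hqmul : ∀ k : ℕ, q * (b * q ^ k) = b * q ^ (k + 1) := by
    intro k; rw [pow_succ]; ring
  -- step lemmas
  have step : ∀ (h : ℝ → ℝ),
      (∀ x, x ∈ Icc a b → q * x ∈ Icc a b → h (q * x) ≤ h x) →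
      ∀ i j, i ≤ j → j < n → h (b * q ^ j) ≤ h (b * q ^ i) := by
    intro h hh i j hij hjn
    induction j with
    | zero => simp_all
    | succ m ih =>
      rcases Nat.lt_or_ge i (m + 1) with h1 | h1
      · have h2 : h (b * q ^ (m + 1)) ≤ h (b * q ^ m) := by
          have := hh (b * q ^ m) (hmem m (by omega)) (by rw [hqmul]; exact hmem (m + 1) (by omega))
          rwa [hqmul] at this
        exact h2.trans (ih (by omega) (by omega))
      · have : i = m + 1 := by omega
        subst this; exact le_refl _
  -- sync
  have hsync : ∀ i ∈ Finset.range n, ∀ j ∈ Finset.range n,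
      0 ≤ (f (b * q ^ i) - f (b * q ^ j)) * (g (b * q ^ i) - g (b * q ^ j)) := by
    intro i hi j hj
    simp only [Finset.mem_range] at hi hj
    rcases hmono with ⟨hf, hg⟩ | ⟨hf, hg⟩
    · rcases le_total i j with hij | hij
      · have hF := step f hf i j hij hj
        have hG := step g hg i j hij hj
        exact mul_nonneg (by linarith) (by linarith)
      · have hF := step f hf j i hij hi
        have hG := step g hg j i hij hi
        nlinarith
    · rcases le_total i j with hij | hij
      · have hF := step (fun x => -f x) (fun x hx hqx => by simpa using hf x hx hqx) i j hij hj
        have hG := step (fun x => -g x) (fun x hx hqx => by simpa using hg x hx hqx) i j hij hj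
        nlinarith
      · have hF := step (fun x => -f x) (fun x hx hqx => by simpa using hf x hx hqx) j i hij hi
        have hG := step (fun x => -g x) (fun x hx hqx => by simpa using hg x hx hqx) j i hij hi
        exact mul_nonneg (by linarith) (by linarith)
  -- Chebyshev
  have key := weighted_chebyshev n (fun k => q ^ k) (fun k => f (b * q ^ k))
    (fun k => g (b * q ^ k)) (fun k _ => by positivity) hsync
  set S1 := ∑ k ∈ Finset.range n, q ^ k with hS1def
  set Sf := ∑ k ∈ Finset.range n, f (b * q ^ k) * q ^ k with hSf
  set Sg := ∑ k ∈ Finset.range n, g (b * q ^ k) * q ^ k with hSg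
  set S2 := ∑ k ∈ Finset.range n, f (b * q ^ k) * g (b * q ^ k) * q ^ k with hS2
  have key' : Sf * Sg ≤ S1 * S2 := by
    have e1 : Sf = ∑ k ∈ Finset.range n, q ^ k * f (b * q ^ k) := by
      rw [hSf]; exact Finset.sum_congr rfl fun k _ => by ring
    have e2 : Sg = ∑ k ∈ Finset.range n, q ^ k * g (b * q ^ k) := by
      rw [hSg]; exact Finset.sum_congr rfl fun k _ => by ring
    have e3 : S2 = ∑ k ∈ Finset.range n, q ^ k * f (b * q ^ k) * g (b * q ^ k) := by
      rw [hS2]; exact Finset.sum_congr rfl fun k _ => by ring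
    rw [e1, e2, e3]; exact key
  have hS1pos : 0 < S1 := by
    rw [hS1def]
    apply Finset.sum_pos (fun k _ => by positivity)
    exact Finset.nonempty_range_iff.mpr (by omega)
  have hc : 0 < b * (1 - q) := mul_pos hb (by linarith)
  have hba : b - a = b * (1 - q) * S1 := by
    have h1 : q - 1 ≠ 0 := by linarith
    rw [ha, hS1def, geom_sum_eq (by linarith : q ≠ 1)]
    field_simp
    ring
  rw [ge_iff_le, hba]
  have hbapos : 0 < b * (1 - q) * S1 := mul_pos hc hS1pos
  calc 1 / (b * (1 - q) * S1) * (b * (1 - q) * Sf) * (b * (1 - q) * Sg)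
      = b * (1 - q) * (Sf * Sg) / S1 := by field_simp
    _ ≤ b * (1 - q) * (S1 * S2) / S1 := by
        gcongr
    _ = b * (1 - q) * S2 := by field_simp
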